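/- arXiv:2406.06360 — 4 statements merged into one kernel-verified Lean document; each statement's English description precedes it below -/
import Mathlib

section
/- Let U and V be unitary operators and O a Hermitian operator, and let k be a positive integer. Then ‖V^k O (V†)^k − (UV)^k O (V† U†)^k‖ ≤ Σ_{j=1}^{k} ‖V^j O (V†)^j − U V^j O (V†)^j U†‖. -/
open scoped Matrix.Norms.L2Operator Matrix

private lemma unitary_mul_norm {n : ℕ} (W X : Matrix (Fin n) (Fin n) ℂ)
    (hW : Wᴴ * W = 1) : ‖W * X‖ = ‖X‖ := by
  have h1 := Matrix.l2_opNorm_conjTranspose_mul_self (W * X)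
  rw [Matrix.conjTranspose_mul, Matrix.mul_assoc, ← Matrix.mul_assoc Wᴴ W X, hW,
    Matrix.one_mul, Matrix.l2_opNorm_conjTranspose_mul_self X] at h1
  have := norm_nonneg (W * X); have := norm_nonneg X
  nlinarith [sq_nonneg (‖W * X‖ - ‖X‖), sq_nonneg (‖W * X‖ + ‖X‖)]

private lemma unitary_conj_norm {n : ℕ} (W X : Matrix (Fin n) (Fin n) ℂ)
    (hW : Wᴴ * W = 1) : ‖W * X * Wᴴ‖ = ‖X‖ := by
  rw [Matrix.mul_assoc, unitary_mul_norm _ _ hW]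
  rw [← Matrix.l2_opNorm_conjTranspose (X * Wᴴ), Matrix.conjTranspose_mul,
    Matrix.conjTranspose_conjTranspose, unitary_mul_norm _ _ hW,
    Matrix.l2_opNorm_conjTranspose]

/-- Telescoping bound: for unitary `U`, `V`, Hermitian `O` and `k ≥ 1`,
`‖Vᵏ O (V†)ᵏ − (UV)ᵏ O (V†U†)ᵏ‖ ≤ Σ_{j=1}^k ‖Vʲ O (V†)ʲ − U Vʲ O (V†)ʲ U†‖`. -/
theorem telescoping_bound {n : ℕ} (U V O : Matrix (Fin n) (Fin n) ℂ)
    (hU₁ : Uᴴ * U = 1) (hU₂ : U * Uᴴ = 1)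
    (hV₁ : Vᴴ * V = 1) (hV₂ : V * Vᴴ = 1)
    (hO : O.IsHermitian) (k : ℕ) (hk : 1 ≤ k) :
    ‖V ^ k * O * Vᴴ ^ k - (U * V) ^ k * O * (Vᴴ * Uᴴ) ^ k‖ ≤
      ∑ j ∈ Finset.Icc 1 k, ‖V ^ j * O * Vᴴ ^ j - U * (V ^ j * O * Vᴴ ^ j) * Uᴴ‖ := by
  have hUV : (U * V)ᴴ * (U * V) = 1 := by
    rw [Matrix.conjTranspose_mul, Matrix.mul_assoc, ← Matrix.mul_assoc Uᴴ U V, hU₁,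
      Matrix.one_mul, hV₁]
  induction k, hk using Nat.le_induction with
  | base =>
    rw [Finset.Icc_self, Finset.sum_singleton]
    apply le_of_eq
    congr 1
    simp [pow_one, Matrix.mul_assoc]
  | succ k hk ih =>
    set A := V ^ (k + 1) * O * Vᴴ ^ (k + 1) with hA
    set X := V ^ k * O * Vᴴ ^ k - (U * V) ^ k * O * (Vᴴ * Uᴴ) ^ k with hX
    have key : V ^ (k + 1) * O * Vᴴ ^ (k + 1) - (U * V) ^ (k + 1) * O * (Vᴴ * Uᴴ) ^ (k + 1)
        = (A - U * A * Uᴴ) + (U * V) * X * ((U * V)ᴴ) := by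
      have h1 : (U * V) * (V ^ k * O * Vᴴ ^ k) * ((U * V)ᴴ) = U * A * Uᴴ := by
        rw [hA, Matrix.conjTranspose_mul, pow_succ', pow_succ]
        simp [Matrix.mul_assoc]
      have h2 : (U * V) * ((U * V) ^ k * O * (Vᴴ * Uᴴ) ^ k) * ((U * V)ᴴ)
          = (U * V) ^ (k + 1) * O * (Vᴴ * Uᴴ) ^ (k + 1) := by
        have hadj : (U * V)ᴴ = Vᴴ * Uᴴ := by rw [Matrix.conjTranspose_mul]
        rw [hadj, pow_succ', pow_succ]
        simp [Matrix.mul_assoc]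
      rw [hX, Matrix.mul_sub, Matrix.sub_mul, h1, h2]
      abel
    rw [key, Finset.sum_Icc_succ_top (by omega : 1 ≤ k + 1)]
    refine le_trans (norm_add_le _ _) ?_
    rw [unitary_conj_norm _ _ hUV]
    have : ‖A - U * A * Uᴴ‖ = ‖V ^ (k+1) * O * Vᴴ ^ (k+1)
        - U * (V ^ (k+1) * O * Vᴴ ^ (k+1)) * Uᴴ‖ := rfl
    rw [this]
    linarith [ih]
end

section
/- For positive definite unit-trace matrices A and B, the trace of the circle product satisfies Tr[exp(log A + log B)] ≤ λ_max(A), where λ_max(A) is the largest eigenvalue of A. -/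
open scoped Matrix ComplexOrder

open Matrix Finset

namespace TraceCircleAux

variable {n : ℕ}

lemma conj_diag_entry (P : Matrix (Fin n) (Fin n) ℂ) (d : Fin n → ℝ) (i : Fin n) :
    (star P * Matrix.diagonal (Complex.ofReal ∘ d) * P) i i
      = ((∑ k, d k * Complex.normSq (P k i) : ℝ) : ℂ) := by
  rw [Matrix.mul_apply]
  push_cast
  refine Finset.sum_congr rfl fun k _ => ?_
  rw [Matrix.mul_diagonal, Matrix.star_apply]
  simp only [Function.comp_apply]
  have h : ∀ z c : ℂ, star z * c * z = c * (z * (starRingEnd ℂ) z) := fun z c => by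
    simp only [Complex.star_def]; ring
  rw [h, Complex.mul_conj]

lemma colsum (M : Matrix (Fin n) (Fin n) ℂ) (hM : star M * M = 1) (i : Fin n) :
    ∑ k, Complex.normSq (M k i) = 1 := by
  have h : (star M * M) i i = 1 := by rw [hM, Matrix.one_apply_eq]
  rw [Matrix.mul_apply] at h
  have h2 : ∑ k, ((Complex.normSq (M k i) : ℝ) : ℂ) = 1 := by
    rw [← h]
    refine Finset.sum_congr rfl fun k _ => ?_
    rw [Matrix.star_apply]
    have : ∀ z : ℂ, star z * z = ((Complex.normSq z : ℝ) : ℂ) := fun z => by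
      simp only [Complex.star_def]
      rw [mul_comm, Complex.mul_conj]
    exact (this _).symm
  exact_mod_cast (by push_cast at h2 ⊢; exact h2 : ((∑ k, Complex.normSq (M k i) : ℝ) : ℂ) = 1)

lemma cfc_isHermitian {C : Matrix (Fin n) (Fin n) ℂ} (hC : C.IsHermitian) (f : ℝ → ℝ) :
    (hC.cfc f).IsHermitian := by
  rw [Matrix.IsHermitian.cfc]
  have hd : (Matrix.diagonal (RCLike.ofReal ∘ f ∘ hC.eigenvalues) :
      Matrix (Fin n) (Fin n) ℂ).IsHermitian := by
    refine Matrix.isHermitian_diagonal_of_self_adjoint _ ?_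
    ext k
    simp [Pi.star_apply, Complex.star_def, Complex.conj_ofReal]
  simpa [Matrix.star_eq_conjTranspose] using
    Matrix.isHermitian_mul_mul_conjTranspose
      (hC.eigenvectorUnitary : Matrix (Fin n) (Fin n) ℂ) hd

lemma entry_eq {C : Matrix (Fin n) (Fin n) ℂ} (hC : C.IsHermitian) (f : ℝ → ℝ)
    (W : Matrix (Fin n) (Fin n) ℂ) (i : Fin n) :
    (star W * hC.cfc f * W) i i =
      ((∑ k, f (hC.eigenvalues k) *
        Complex.normSq ((star (hC.eigenvectorUnitary : Matrix (Fin n) (Fin n) ℂ) * W) k i) : ℝ)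
          : ℂ) := by
  rw [Matrix.IsHermitian.cfc, Unitary.conjStarAlgAut_apply]
  set U := (hC.eigenvectorUnitary : Matrix (Fin n) (Fin n) ℂ)
  have hre : star W * (U * Matrix.diagonal (RCLike.ofReal ∘ f ∘ hC.eigenvalues) * star U) * W
      = star (star U * W) * Matrix.diagonal (Complex.ofReal ∘ (f ∘ hC.eigenvalues))
        * (star U * W) := by
    rw [StarMul.star_mul, star_star]
    simp only [Matrix.mul_assoc]
    rfl
  rw [hre, conj_diag_entry]
  norm_num [Function.comp]

end TraceCircleAux

open TraceCircleAux in
/-- For positive definite unit-trace matrices `A`, `B`, the trace of the circle product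
satisfies `Tr[exp(log A + log B)] ≤ λ_max(A)`. -/
theorem trace_circleProd_le_lambdaMax {n : ℕ} [NeZero n]
    (A B : Matrix (Fin n) (Fin n) ℂ)
    (hA : A.PosDef) (hB : B.PosDef)
    (htA : A.trace = 1) (htB : B.trace = 1) :
    (NormedSpace.exp (hA.1.cfc Real.log + hB.1.cfc Real.log)).trace ≤
      ((⨆ i, hA.1.eigenvalues i : ℝ) : ℂ) := by
  classical
  have hnne : Nonempty (Fin n) := Fin.pos_iff_nonempty.mp (Nat.pos_of_ne_zero (NeZero.ne n))
  set H := hA.1.cfc Real.log with hHdef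
  set K := hB.1.cfc Real.log with hKdef
  have hH : H.IsHermitian := cfc_isHermitian hA.1 Real.log
  have hK : K.IsHermitian := cfc_isHermitian hB.1 Real.log
  have hM : (H + K).IsHermitian := hH.add hK
  set W := (hM.eigenvectorUnitary : Matrix (Fin n) (Fin n) ℂ) with hWdef
  set μ := hM.eigenvalues with hμdef
  set α := hA.1.eigenvalues with hαdef
  set β := hB.1.eigenvalues with hβdef
  set U := (hA.1.eigenvectorUnitary : Matrix (Fin n) (Fin n) ℂ) with hUdef
  set V := (hB.1.eigenvectorUnitary : Matrix (Fin n) (Fin n) ℂ) with hVdef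
  have hWs : star W * W = 1 := Unitary.star_mul_self_of_mem (SetLike.coe_mem _)
  have hWss : W * star W = 1 := Unitary.mul_star_self_of_mem (SetLike.coe_mem _)
  have hUss : U * star U = 1 := Unitary.mul_star_self_of_mem (SetLike.coe_mem _)
  have hVs : star V * V = 1 := Unitary.star_mul_self_of_mem (SetLike.coe_mem _)
  have hVss : V * star V = 1 := Unitary.mul_star_self_of_mem (SetLike.coe_mem _)
  -- trace of the exponential
  have hWinv : W⁻¹ = star W := Matrix.inv_eq_left_inv hWs
  have hWunit : IsUnit W := ⟨⟨W, star W, hWss, hWs⟩, rfl⟩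
  have hexp : NormedSpace.exp (H + K)
      = W * Matrix.diagonal (Complex.ofReal ∘ Real.exp ∘ μ) * star W := by
    have hfun : NormedSpace.exp (RCLike.ofReal ∘ hM.eigenvalues : Fin n → ℂ)
        = Complex.ofReal ∘ Real.exp ∘ μ := by
      rw [Pi.exp_def]
      funext i
      simp only [Function.comp_apply]
      rw [← Complex.exp_eq_exp_ℂ]
      exact (Complex.ofReal_exp _).symm
    conv_lhs => rw [hM.spectral_theorem, Unitary.conjStarAlgAut_apply]
    rw [← hWinv, Matrix.exp_conj W _ hWunit, Matrix.exp_diagonal, hfun, hWinv]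
  have htr : (NormedSpace.exp (H + K)).trace = ((∑ i, Real.exp (μ i) : ℝ) : ℂ) := by
    rw [hexp, Matrix.trace_mul_cycle, hWs, one_mul, Matrix.trace_diagonal]
    push_cast
    simp [Function.comp]
  -- eigenvalue decomposition
  set P := star U * W with hPdef
  set Q := star V * W with hQdef
  set p := fun i k => Complex.normSq (P k i) with hpdef
  set q := fun i k => Complex.normSq (Q k i) with hqdef
  have hPs : star P * P = 1 := by
    rw [hPdef, StarMul.star_mul, star_star, Matrix.mul_assoc, ← Matrix.mul_assoc U, hUss,
      Matrix.one_mul, hWs]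
  have hQs : star Q * Q = 1 := by
    rw [hQdef, StarMul.star_mul, star_star, Matrix.mul_assoc, ← Matrix.mul_assoc V, hVss,
      Matrix.one_mul, hWs]
  have hQQ : Q * star Q = 1 := by
    rw [hQdef, StarMul.star_mul, star_star, Matrix.mul_assoc, ← Matrix.mul_assoc W, hWss,
      Matrix.one_mul, hVs]
  have hQrow : ∀ k, ∑ i, q i k = 1 := by
    intro k
    have h := colsum (star Q) (by rw [star_star]; exact hQQ) k
    simpa [hqdef, Matrix.star_apply, Complex.normSq_conj] using h
  have hdiag : star W * (H + K) * W = Matrix.diagonal (RCLike.ofReal ∘ hM.eigenvalues) := by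
    have h := hM.conjStarAlgAut_star_eigenvectorUnitary
    rw [Unitary.conjStarAlgAut_apply, Unitary.coe_star, star_star] at h
    exact h
  have hμi : ∀ i, μ i = (∑ k, Real.log (α k) * p i k) + ∑ k, Real.log (β k) * q i k := by
    intro i
    have h1 : (star W * (H + K) * W) i i = ((μ i : ℝ) : ℂ) := by
      rw [hdiag]
      simp [hμdef]
    have h2 : star W * (H + K) * W = star W * H * W + star W * K * W := by
      rw [Matrix.mul_add, Matrix.add_mul]
    rw [h2, Matrix.add_apply, hHdef, hKdef, entry_eq hA.1 Real.log W i,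
      entry_eq hB.1 Real.log W i] at h1
    exact_mod_cast h1.symm
  -- bounds
  set S := ⨆ k, α k with hSdef
  have hαpos : ∀ k, 0 < α k := fun k => hA.eigenvalues_pos k
  have hβpos : ∀ k, 0 < β k := fun k => hB.eigenvalues_pos k
  have hle : ∀ k, α k ≤ S := fun k => le_ciSup (Set.Finite.bddAbove (Set.finite_range α)) k
  have hSpos : 0 < S := lt_of_lt_of_le (hαpos (Classical.arbitrary _)) (hle _)
  have key : ∀ i, Real.exp (μ i) ≤ S * ∑ k, q i k * β k := by
    intro i
    rw [hμi i, Real.exp_add]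
    have b1 : Real.exp (∑ k, Real.log (α k) * p i k) ≤ S := by
      have hlog : ∑ k, Real.log (α k) * p i k ≤ Real.log S := by
        calc ∑ k, Real.log (α k) * p i k ≤ ∑ k, Real.log S * p i k :=
              Finset.sum_le_sum fun k _ => mul_le_mul_of_nonneg_right
                (Real.log_le_log (hαpos k) (hle k)) (Complex.normSq_nonneg _)
          _ = Real.log S := by rw [← Finset.mul_sum, colsum P hPs i, mul_one]
      calc Real.exp (∑ k, Real.log (α k) * p i k) ≤ Real.exp (Real.log S) :=
            Real.exp_le_exp.mpr hlog
        _ = S := Real.exp_log hSpos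
    have b2 : Real.exp (∑ k, Real.log (β k) * q i k) ≤ ∑ k, q i k * β k := by
      have hj := convexOn_exp.map_sum_le (t := Finset.univ) (w := fun k => q i k)
        (p := fun k => Real.log (β k)) (fun k _ => Complex.normSq_nonneg _)
        (colsum Q hQs i) (fun k _ => Set.mem_univ _)
      calc Real.exp (∑ k, Real.log (β k) * q i k)
          = Real.exp (∑ k, q i k • Real.log (β k)) := by
            congr 1
            exact Finset.sum_congr rfl fun k _ => by rw [smul_eq_mul, mul_comm]
        _ ≤ ∑ k, q i k * Real.exp (Real.log (β k)) := hj
        _ = ∑ k, q i k * β k := Finset.sum_congr rfl fun k _ => by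
              rw [Real.exp_log (hβpos k)]
    exact mul_le_mul b1 b2 (Real.exp_pos _).le hSpos.le
  -- trace of B
  have hβsum : ∑ k, β k = 1 := by
    have h := congrArg Matrix.trace hB.1.spectral_theorem
    rw [Unitary.conjStarAlgAut_apply, Matrix.trace_mul_cycle, hVs, one_mul, Matrix.trace_diagonal, htB] at h
    simp only [Function.comp_apply] at h
    rw [← RCLike.ofReal_sum] at h
    rw [hβdef]
    exact RCLike.ofReal_injective (K := ℂ) (h.symm.trans RCLike.ofReal_one.symm)
  -- putting it together
  rw [htr]
  rw [Complex.real_le_real]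
  calc ∑ i, Real.exp (μ i) ≤ ∑ i, S * ∑ k, q i k * β k := Finset.sum_le_sum fun i _ => key i
    _ = S := by
        rw [← Finset.mul_sum, Finset.sum_comm]
        have hc : ∀ k, ∑ i, q i k * β k = β k := fun k => by
          rw [← Finset.sum_mul, hQrow k, one_mul]
        rw [Finset.sum_congr rfl fun k _ => hc k, hβsum, mul_one]
end

section
/- The integral ∫_0^∞ t·log(coth(t)) dt equals 7ζ(3)/16, where ζ is the Riemann zeta function; in particular it is strictly less than 9/16. -/
open Real MeasureTheory

private lemma aux_integrable {b : ℝ} (hb : 0 < b) :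
    IntegrableOn (fun t : ℝ => t * Real.exp (-(b * t))) (Set.Ioi 0) := by
  have h := integrableOn_rpow_mul_exp_neg_mul_rpow (p := 1) (s := 1) (b := b)
    (by norm_num) (by norm_num) hb
  simpa [Real.rpow_one, neg_mul] using h

private lemma aux_int {b : ℝ} (hb : 0 < b) :
    ∫ t in Set.Ioi (0 : ℝ), t * Real.exp (-(b * t)) = 1 / b ^ 2 := by
  have h := Real.integral_rpow_mul_exp_neg_mul_Ioi (a := 2) (r := b) (by norm_num) hb
  rw [Real.Gamma_two, mul_one, show ((2 : ℝ) - 1) = 1 by norm_num] at h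
  simp_rw [Real.rpow_one] at h
  rw [h, show ((2:ℝ)) = ((2:ℕ):ℝ) by norm_num, Real.rpow_natCast, div_pow, one_pow]

private lemma aux_ratio {t : ℝ} (ht : 0 < t) :
    Real.cosh t / Real.sinh t = (1 + Real.exp (-(2 * t))) / (1 - Real.exp (-(2 * t))) := by
  have h2 : Real.exp (-(2 * t)) = Real.exp (-t) * Real.exp (-t) := by
    rw [← Real.exp_add]; ring_nf
  have h3 : Real.exp (-t) * Real.exp t = 1 := by rw [← Real.exp_add]; simp
  have hlt : Real.exp (-t) < Real.exp t := Real.exp_lt_exp.mpr (by linarith)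
  have hd : Real.exp t - Real.exp (-t) ≠ 0 := by linarith
  have hq : Real.exp (-(2 * t)) < 1 := Real.exp_lt_one_iff.mpr (by linarith)
  have hd2 : 1 - Real.exp (-(2 * t)) ≠ 0 := by linarith
  have hd' : (Real.exp t - Real.exp (-t)) / 2 ≠ 0 := by
    intro h; apply hd; linarith
  rw [Real.cosh_eq, Real.sinh_eq, div_eq_div_iff hd' hd2]
  linear_combination (-(Real.exp t)) * h2 + (-(Real.exp (-t))) * h3

private lemma aux_hasSum {t : ℝ} (ht : 0 < t) :
    HasSum (fun k : ℕ =>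
        2 * (1 / (2 * (k : ℝ) + 1)) * (t * Real.exp (-((2 * (2 * (k : ℝ) + 1)) * t))))
      (t * Real.log (Real.cosh t / Real.sinh t)) := by
  set x := Real.exp (-(2 * t)) with hxdef
  have hx0 : 0 < x := Real.exp_pos _
  have hx : |x| < 1 := by
    rw [abs_of_pos hx0]
    exact Real.exp_lt_one_iff.mpr (by linarith)
  have h := (Real.hasSum_log_sub_log_of_abs_lt_one hx).mul_left t
  have hterm : ∀ k : ℕ,
      t * (2 * (1 / (2 * (k : ℝ) + 1)) * x ^ (2 * k + 1)) =
      2 * (1 / (2 * (k : ℝ) + 1)) * (t * Real.exp (-((2 * (2 * (k : ℝ) + 1)) * t))) := by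
    intro k
    rw [hxdef, ← Real.exp_nat_mul]
    push_cast
    ring_nf
  have hval : t * (Real.log (1 + x) - Real.log (1 - x)) =
      t * Real.log (Real.cosh t / Real.sinh t) := by
    rw [aux_ratio ht, Real.log_div (by positivity) (by
      have hq : x < 1 := Real.exp_lt_one_iff.mpr (by linarith)
      linarith)]
  rw [← hval]
  exact h.congr_fun fun k => (hterm k).symm

private lemma aux_Ssum : Summable (fun n : ℕ => 1 / (n : ℝ) ^ 3) :=
  Real.summable_one_div_nat_pow.mpr (by norm_num)

private lemma aux_oddf : Summable (fun k : ℕ => 1 / ((2 * k + 1 : ℕ) : ℝ) ^ 3) :=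
  aux_Ssum.comp_injective (fun a b h => by simpa using h)

private lemma aux_odd_sum : Summable (fun k : ℕ => 1 / (2 * (k : ℝ) + 1) ^ 3) :=
  aux_oddf.congr fun k => by push_cast; ring

private lemma aux_even : Summable (fun k : ℕ => 1 / ((2 * k : ℕ) : ℝ) ^ 3) :=
  aux_Ssum.comp_injective (mul_right_injective₀ two_ne_zero)

private lemma aux_hOdd :
    ∑' k : ℕ, 1 / (2 * (k : ℝ) + 1) ^ 3 = 7 / 8 * ∑' n : ℕ, 1 / (n : ℝ) ^ 3 := by
  have h := tsum_even_add_odd (f := fun n : ℕ => 1 / (n : ℝ) ^ 3) aux_even aux_oddf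
  have he : ∑' k : ℕ, 1 / ((2 * k : ℕ) : ℝ) ^ 3 = 1 / 8 * ∑' n : ℕ, 1 / (n : ℝ) ^ 3 := by
    rw [← tsum_mul_left]
    exact tsum_congr fun k => by push_cast; ring
  have ho : ∑' k : ℕ, 1 / ((2 * k + 1 : ℕ) : ℝ) ^ 3 =
      ∑' k : ℕ, 1 / (2 * (k : ℝ) + 1) ^ 3 :=
    tsum_congr fun k => by push_cast; ring
  rw [he, ho] at h
  linarith [h]

private noncomputable def auxF (k : ℕ) (t : ℝ) : ℝ :=
  2 * (1 / (2 * (k : ℝ) + 1)) * (t * Real.exp (-((2 * (2 * (k : ℝ) + 1)) * t)))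

private lemma auxF_b_pos (k : ℕ) : (0 : ℝ) < 2 * (2 * (k : ℝ) + 1) := by positivity

private lemma auxF_int (k : ℕ) : Integrable (auxF k) (volume.restrict (Set.Ioi 0)) :=
  (aux_integrable (auxF_b_pos k)).const_mul _

private lemma auxF_val (k : ℕ) :
    ∫ t in Set.Ioi (0 : ℝ), auxF k t = 1 / 2 * (1 / (2 * (k : ℝ) + 1) ^ 3) := by
  unfold auxF
  rw [MeasureTheory.integral_const_mul, aux_int (auxF_b_pos k)]
  have h1 : (2 * (k : ℝ) + 1) ≠ 0 := by positivity
  field_simp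

private lemma auxF_norm_val (k : ℕ) :
    ∫ t in Set.Ioi (0 : ℝ), ‖auxF k t‖ = 1 / 2 * (1 / (2 * (k : ℝ) + 1) ^ 3) := by
  rw [← auxF_val k]
  refine setIntegral_congr_fun measurableSet_Ioi fun t ht => ?_
  refine Real.norm_of_nonneg ?_
  unfold auxF
  exact mul_nonneg (by positivity) (mul_nonneg (le_of_lt ht) (Real.exp_pos _).le)

private lemma aux_hI :
    (∫ t in Set.Ioi (0 : ℝ), t * Real.log (Real.cosh t / Real.sinh t)) =
      7 / 16 * ∑' n : ℕ, 1 / (n : ℝ) ^ 3 := by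
  have hsum_int : Summable fun k : ℕ => ∫ t in Set.Ioi (0 : ℝ), ‖auxF k t‖ :=
    (aux_odd_sum.mul_left (1 / 2)).congr fun k => (auxF_norm_val k).symm
  have hswap : ∑' k : ℕ, ∫ t in Set.Ioi (0 : ℝ), auxF k t =
      ∫ t in Set.Ioi (0 : ℝ), ∑' k : ℕ, auxF k t :=
    integral_tsum_of_summable_integral_norm auxF_int hsum_int
  have hptw : ∫ t in Set.Ioi (0 : ℝ), ∑' k : ℕ, auxF k t =
      ∫ t in Set.Ioi (0 : ℝ), t * Real.log (Real.cosh t / Real.sinh t) :=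
    setIntegral_congr_fun measurableSet_Ioi fun t ht => (aux_hasSum ht).tsum_eq
  rw [← hptw, ← hswap]
  calc ∑' k : ℕ, ∫ t in Set.Ioi (0 : ℝ), auxF k t
      = ∑' k : ℕ, 1 / 2 * (1 / (2 * (k : ℝ) + 1) ^ 3) := tsum_congr fun k => auxF_val k
    _ = 1 / 2 * ∑' k : ℕ, 1 / (2 * (k : ℝ) + 1) ^ 3 := tsum_mul_left
    _ = 7 / 16 * ∑' n : ℕ, 1 / (n : ℝ) ^ 3 := by rw [aux_hOdd]; ring

private lemma aux_bound : (∑' n : ℕ, 1 / (n : ℝ) ^ 3) < 9 / 7 := by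
  have h3 := Summable.sum_add_tsum_nat_add (f := fun n : ℕ => 1 / (n : ℝ) ^ 3) 3 aux_Ssum
  have hshift : Summable (fun k : ℕ => 1 / ((k + 3 : ℕ) : ℝ) ^ 3) :=
    (summable_nat_add_iff (f := fun n : ℕ => 1 / (n : ℝ) ^ 3) 3).mpr aux_Ssum
  have hg : HasSum (fun k : ℕ =>
      1 / (2 * ((k : ℝ) + 2) ^ 2) - 1 / (2 * ((k : ℝ) + 1 + 2) ^ 2)) (1 / 8) := by
    rw [hasSum_iff_tendsto_nat_of_nonneg]
    · have heq : ∀ n : ℕ, ∑ i ∈ Finset.range n,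
          (1 / (2 * ((i : ℝ) + 2) ^ 2) - 1 / (2 * ((i : ℝ) + 1 + 2) ^ 2)) =
          1 / 8 - 1 / (2 * ((n : ℝ) + 2) ^ 2) := by
        intro n
        have := Finset.sum_range_sub' (fun i : ℕ => 1 / (2 * ((i : ℝ) + 2) ^ 2)) n
        simp only [Nat.cast_add, Nat.cast_one] at this ⊢
        rw [this]
        norm_num
      simp_rw [heq]
      have h0 : Filter.Tendsto (fun n : ℕ => 1 / (2 * ((n : ℝ) + 2) ^ 2))
          Filter.atTop (nhds 0) := by
        have h1 : Filter.Tendsto (fun n : ℕ => ((n : ℝ) + 2)) Filter.atTop Filter.atTop :=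
          Filter.tendsto_atTop_add_const_right _ 2 tendsto_natCast_atTop_atTop
        have h2 : Filter.Tendsto (fun n : ℕ => 2 * ((n : ℝ) + 2) ^ 2)
            Filter.atTop Filter.atTop := by
          refine Filter.Tendsto.const_mul_atTop (by norm_num) ?_
          exact (h1.atTop_mul_atTop₀ h1).congr (fun n => by ring)
        exact h2.inv_tendsto_atTop.congr fun n => by simp [Pi.inv_apply, one_div]
      simpa using (tendsto_const_nhds.sub h0)
    · intro i
      have h2 : (0 : ℝ) < ((i : ℝ) + 2) ^ 2 := by positivity
      have h3 : ((i : ℝ) + 2) ^ 2 ≤ ((i : ℝ) + 1 + 2) ^ 2 := by nlinarith [i.cast_nonneg (α := ℝ)]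
      rw [sub_nonneg]
      exact one_div_le_one_div_of_le (by positivity) (by nlinarith [i.cast_nonneg (α := ℝ)])
  have htail : (∑' k : ℕ, 1 / ((k + 3 : ℕ) : ℝ) ^ 3) ≤ 1 / 8 := by
    rw [← hg.tsum_eq]
    refine Summable.tsum_le_tsum (fun k => ?_) hshift hg.summable
    have hk : (0 : ℝ) ≤ (k : ℝ) := k.cast_nonneg
    push_cast
    rw [div_sub_div _ _ (by positivity) (by positivity),
      div_le_div_iff₀ (by positivity) (by positivity)]
    ring_nf
    nlinarith [hk]
  have hhead : ∑ i ∈ Finset.range 3, 1 / ((i : ℝ)) ^ 3 = 1 + 1 / 8 := by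
    norm_num [Finset.sum_range_succ]
  rw [← h3, hhead]
  linarith [htail]

/-- `∫_0^∞ t log(coth t) dt = 7ζ(3)/16`, and in particular it is strictly less than `9/16`. -/
theorem integral_mul_log_coth :
    (((∫ t in Set.Ioi (0 : ℝ), t * Real.log (Real.cosh t / Real.sinh t)) : ℝ) : ℂ) =
        7 * riemannZeta 3 / 16 ∧
      (∫ t in Set.Ioi (0 : ℝ), t * Real.log (Real.cosh t / Real.sinh t)) < 9 / 16 := by
  have hzr : ((∑' n : ℕ, 1 / (n : ℝ) ^ 3 : ℝ) : ℂ) = riemannZeta 3 := by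
    rw [show (3 : ℂ) = ((3 : ℕ) : ℂ) by norm_num,
      zeta_nat_eq_tsum_of_gt_one (by norm_num : 1 < 3), Complex.ofReal_tsum]
    exact tsum_congr fun n => by push_cast; ring
  refine ⟨?_, ?_⟩
  · rw [aux_hI]
    push_cast [← hzr]
    ring
  · rw [aux_hI]
    have := aux_bound
    linarith
end

section
/- For D ≥ 1 and β, π as usual, ∫_D^∞ t · log(coth(πt/(2β))) dt ≤ 4(βD/π + β²/π²) e^{−πD/β}. -/
open Real MeasureTheory Filter

lemma log_coth_le (u : ℝ) (hu : 1 ≤ u) :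
    Real.log (Real.cosh u / Real.sinh u) ≤ 4 * Real.exp (-(2 * u)) := by
  have hs : 0 < Real.sinh u := Real.sinh_pos_iff.2 (by linarith)
  have hc : 0 < Real.cosh u := Real.cosh_pos u
  have hpos : 0 < Real.cosh u / Real.sinh u := div_pos hc hs
  have h1 : Real.log (Real.cosh u / Real.sinh u) ≤ Real.cosh u / Real.sinh u - 1 :=
    Real.log_le_sub_one_of_pos hpos
  have h2 : Real.cosh u / Real.sinh u - 1 = Real.exp (-u) / Real.sinh u := by
    rw [div_sub_one hs.ne', Real.cosh_sub_sinh]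
  have he2 : (2 : ℝ) ≤ Real.exp 1 := by
    have := Real.add_one_le_exp 1; linarith
  have ha : Real.exp (-u) ≤ 1 / 2 := by
    have h3 : Real.exp (-u) ≤ Real.exp (-1) := Real.exp_le_exp.2 (by linarith)
    have h4 : Real.exp (-1) ≤ 1 / 2 := by
      rw [Real.exp_neg]
      rw [inv_le_comm₀ (Real.exp_pos 1) (by norm_num)]
      linarith
    linarith
  have key : Real.exp (-u) / Real.sinh u ≤ 4 * Real.exp (-(2 * u)) := by
    rw [div_le_iff₀ hs, Real.sinh_eq]
    have hexp2 : Real.exp (-(2 * u)) = Real.exp (-u) * Real.exp (-u) := by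
      rw [← Real.exp_add]; ring_nf
    have hmul : Real.exp (-u) * Real.exp u = 1 := by
      rw [← Real.exp_add]; simp
    nlinarith [Real.exp_pos (-u), Real.exp_pos u]
  calc Real.log (Real.cosh u / Real.sinh u) ≤ Real.cosh u / Real.sinh u - 1 := h1
    _ = Real.exp (-u) / Real.sinh u := h2
    _ ≤ 4 * Real.exp (-(2 * u)) := key

set_option maxHeartbeats 1000000 in
/-- For `β > 0` and `D ≥ 1` with `πD/(2β) ≥ 1`,
`∫_D^∞ t log(coth(πt/(2β))) dt ≤ 4(βD/π + β²/π²) e^{−πD/β}`. -/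
theorem integral_tail_log_coth_bound (β D : ℝ) (hβ : 0 < β) (hD : 1 ≤ D)
    (hπD : 1 ≤ π * D / (2 * β)) :
    (∫ t in Set.Ioi D, t * Real.log (Real.cosh (π * t / (2 * β)) / Real.sinh (π * t / (2 * β)))) ≤
      4 * (β * D / π + β ^ 2 / π ^ 2) * Real.exp (-π * D / β) := by
  have hπ : (0 : ℝ) < π := Real.pi_pos
  set c : ℝ := π / β with hc
  have hcpos : 0 < c := div_pos hπ hβ
  set g : ℝ → ℝ := fun t => 4 * t * Real.exp (-(c * t)) with hg
  set F : ℝ → ℝ := fun t =>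
    -((4 / c ^ 2) * ((c * t) * Real.exp (-(c * t))) + (4 / c ^ 2) * Real.exp (-(c * t))) with hF
  have hfun : F = fun t => -(((4 / c ^ 2) * (c * t) + 4 / c ^ 2) * Real.exp (-(c * t))) := by
    funext t; simp only [hF]; ring
  have hE : ∀ t : ℝ, HasDerivAt (fun t => Real.exp (-(c * t))) (-c * Real.exp (-(c * t))) t := by
    intro t
    have h : HasDerivAt (fun t : ℝ => -(c * t)) (-c) t := by
      have h' := ((hasDerivAt_id t).const_mul c).neg
      rw [mul_one] at h'
      exact h'
    simpa [mul_comm] using h.exp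
  have hFd : ∀ t : ℝ, HasDerivAt F (g t) t := by
    intro t
    have h1 : HasDerivAt (fun t : ℝ => (4 / c ^ 2) * (c * t) + 4 / c ^ 2)
        ((4 / c ^ 2) * c) t := by
      simpa [mul_assoc] using (((hasDerivAt_id t).const_mul c).const_mul (4 / c ^ 2)).add_const
        (4 / c ^ 2)
    have h2 := (h1.mul (hE t)).neg
    rw [hfun]
    refine h2.congr_deriv ?_
    simp only [hg]
    field_simp
    ring
  -- limit of F at infinity
  have hcomp : Tendsto (fun t : ℝ => c * t) atTop atTop :=
    (tendsto_id.const_mul_atTop hcpos)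
  have h0 : Tendsto (fun x : ℝ => x * Real.exp (-x)) atTop (nhds 0) := by
    simpa using Real.tendsto_pow_mul_exp_neg_atTop_nhds_zero 1
  have h0' : Tendsto (fun x : ℝ => Real.exp (-x)) atTop (nhds 0) := by
    exact Real.tendsto_exp_neg_atTop_nhds_zero
  have hFlim : Tendsto F atTop (nhds 0) := by
    have h1 := ((h0.comp hcomp).const_mul (4 / c ^ 2)).add
      ((h0'.comp hcomp).const_mul (4 / c ^ 2))
    have h2 := h1.neg
    simp only [mul_zero, add_zero, neg_zero, Function.comp] at h2
    exact h2
  have hgnn : ∀ t ∈ Set.Ioi D, 0 ≤ g t := by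
    intro t ht
    have : 0 < t := lt_of_lt_of_le (by linarith) (le_of_lt ht)
    positivity
  -- value of the dominating integral
  have hval : ∫ t in Set.Ioi D, g t = 0 - F D :=
    integral_Ioi_of_hasDerivAt_of_nonneg' (fun t _ => hFd t) hgnn hFlim
  have hgint : IntegrableOn g (Set.Ioi D) :=
    integrableOn_Ioi_deriv_of_nonneg' (fun t _ => hFd t) hgnn hFlim
  -- pointwise bound
  set f : ℝ → ℝ := fun t =>
    t * Real.log (Real.cosh (π * t / (2 * β)) / Real.sinh (π * t / (2 * β))) with hf
  have hbound : ∀ t ∈ Set.Ioi D, f t ≤ g t := by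
    intro t ht
    have htD : D < t := ht
    have ht0 : (0 : ℝ) < t := by linarith
    have hu : 1 ≤ π * t / (2 * β) := by
      refine le_trans hπD ?_
      apply div_le_div_of_nonneg_right ?_ (by linarith)
      · nlinarith
    have hlog := log_coth_le _ hu
    have harg : -(2 * (π * t / (2 * β))) = -(c * t) := by
      simp only [hc]; field_simp
    rw [harg] at hlog
    calc f t ≤ t * (4 * Real.exp (-(c * t))) := by
          exact mul_le_mul_of_nonneg_left hlog ht0.le
      _ = g t := by simp only [hg]; ring
  have hfnn : ∀ t ∈ Set.Ioi D, 0 ≤ f t := by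
    intro t ht
    have htD : D < t := ht
    have ht0 : (0 : ℝ) < t := by linarith
    have hu : 1 ≤ π * t / (2 * β) := by
      refine le_trans hπD ?_
      apply div_le_div_of_nonneg_right ?_ (by linarith)
      · nlinarith
    have hs : 0 < Real.sinh (π * t / (2 * β)) := Real.sinh_pos_iff.2 (by linarith)
    have hle : Real.sinh (π * t / (2 * β)) ≤ Real.cosh (π * t / (2 * β)) := by
      have := Real.cosh_sub_sinh (π * t / (2 * β))
      nlinarith [Real.exp_pos (-(π * t / (2 * β)))]
    have : 0 ≤ Real.log (Real.cosh (π * t / (2 * β)) / Real.sinh (π * t / (2 * β))) :=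
      Real.log_nonneg ((one_le_div hs).2 hle)
    exact mul_nonneg ht0.le this
  -- integrability of f
  have hfcont : ContinuousOn f (Set.Ioi D) := by
    apply ContinuousOn.mul continuousOn_id
    apply ContinuousOn.log
    · apply ContinuousOn.div
      · exact (Real.continuous_cosh.comp (by continuity)).continuousOn
      · exact (Real.continuous_sinh.comp (by continuity)).continuousOn
      · intro t ht
        have ht0 : (0 : ℝ) < t := lt_of_lt_of_le (by linarith) (le_of_lt ht)
        exact (Real.sinh_pos_iff.2 (by positivity)).ne'
    · intro t ht
      have ht0 : (0 : ℝ) < t := lt_of_lt_of_le (by linarith) (le_of_lt ht)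
      have hs : 0 < Real.sinh (π * t / (2 * β)) := Real.sinh_pos_iff.2 (by positivity)
      exact (div_pos (Real.cosh_pos _) hs).ne'
  have hfint : IntegrableOn f (Set.Ioi D) := by
    apply hgint.mono' (hfcont.aestronglyMeasurable measurableSet_Ioi)
    filter_upwards [ae_restrict_mem measurableSet_Ioi] with t ht
    rw [Real.norm_eq_abs, abs_of_nonneg (hfnn t ht)]
    exact hbound t ht
  -- conclude
  have hmono : (∫ t in Set.Ioi D, f t) ≤ ∫ t in Set.Ioi D, g t :=
    setIntegral_mono_on hfint hgint measurableSet_Ioi hbound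
  rw [hval] at hmono
  refine le_trans hmono ?_
  have hFD : 0 - F D = 4 * (β * D / π + β ^ 2 / π ^ 2) * Real.exp (-π * D / β) := by
    have h1 : F D = -((4 / c ^ 2) * ((c * D) * Real.exp (-(c * D))) +
        (4 / c ^ 2) * Real.exp (-(c * D))) := rfl
    have h2 : -(c * D) = -π * D / β := by rw [hc]; field_simp
    have hc0 : c ≠ 0 := hcpos.ne'
    have e1 : 4 / c ^ 2 * (c * D) = 4 * (β * D / π) := by
      rw [hc]; rw [div_pow]; field_simp
    have e2 : 4 / c ^ 2 = 4 * (β ^ 2 / π ^ 2) := by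
      rw [hc]; rw [div_pow]; field_simp
    rw [h1, zero_sub, neg_neg, h2, ← mul_assoc (4 / c ^ 2) (c * D), e1, e2]
    ring
  rw [hFD]
end
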